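/- arXiv:2509.21326 — 3 statements merged into one kernel-verified Lean document; each statement's English description precedes it below -/
import Mathlib

section
/- Let P be continuous and a > 0. Then the MACD identity holds: P̄^a(x) − P̄^{2a}(x) = (a/2)·(d/dx) P̄^{a,a}(x), i.e., the difference of the a-window and 2a-window right-endpoint averages equals (a/2) times the derivative of the doubly averaged signal. -/
open MeasureTheory

noncomputable def mavg (P : ℝ → ℝ) (t x : ℝ) : ℝ := (1 / t) * ∫ s in (x - t)..x, P s


noncomputable def davg (P : ℝ → ℝ) (a x : ℝ) : ℝ := (1 / a) * ∫ s in (x - a)..x, mavg P a s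

theorem stmt6 (P : ℝ → ℝ) (hP : Continuous P) (a : ℝ) (ha : 0 < a) (x : ℝ) :
    HasDerivAt (davg P a) ((2 / a) * (mavg P a x - mavg P (2 * a) x)) x := by
  -- G is an antiderivative of P
  set G : ℝ → ℝ := fun y => ∫ s in (0:ℝ)..y, P s with hGdef
  have hG : ∀ y, HasDerivAt G (P y) y := fun y =>
    intervalIntegral.integral_hasDerivAt_right (hP.intervalIntegrable _ _)
      (hP.stronglyMeasurableAtFilter _ _) hP.continuousAt
  have hmavg : ∀ s, mavg P a s = (1 / a) * (G s - G (s - a)) := by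
    intro s
    have : G s - G (s - a) = ∫ t in (s - a)..s, P t := by
      rw [hGdef]
      simp only
      rw [intervalIntegral.integral_interval_sub_left (hP.intervalIntegrable _ _)
        (hP.intervalIntegrable _ _)]
    rw [mavg, ← this]
  have hmavgCont : Continuous (mavg P a) := by
    have hGc : Continuous G := by
      rw [continuous_iff_continuousAt]; exact fun y => (hG y).continuousAt
    have : Continuous fun s => (1 / a) * (G s - G (s - a)) :=
      continuous_const.mul (hGc.sub (hGc.comp (continuous_id.sub continuous_const)))
    exact (continuous_congr fun s => (hmavg s)).mpr this
  -- H is an antiderivative of mavg P a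
  set H : ℝ → ℝ := fun y => ∫ s in (0:ℝ)..y, mavg P a s with hHdef
  have hH : ∀ y, HasDerivAt H (mavg P a y) y := fun y =>
    intervalIntegral.integral_hasDerivAt_right (hmavgCont.intervalIntegrable _ _)
      (hmavgCont.stronglyMeasurableAtFilter _ _) hmavgCont.continuousAt
  have hdavg : ∀ y, davg P a y = (1 / a) * (H y - H (y - a)) := by
    intro y
    have : H y - H (y - a) = ∫ s in (y - a)..y, mavg P a s := by
      rw [hHdef]
      simp only
      rw [intervalIntegral.integral_interval_sub_left (hmavgCont.intervalIntegrable _ _)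
        (hmavgCont.intervalIntegrable _ _)]
    rw [davg, ← this]
  have hd : HasDerivAt (fun y => (1 / a) * (H y - H (y - a)))
      ((1 / a) * (mavg P a x - mavg P a (x - a))) x := by
    have h1 : HasDerivAt (fun y => H (y - a)) (mavg P a (x - a)) x := by
      have := (hH (x - a)).comp x ((hasDerivAt_id x).sub_const a)
      simpa [Function.comp_def] using this
    exact ((hH x).sub h1).const_mul _
  have key : (2 / a) * (mavg P a x - mavg P (2 * a) x)
      = (1 / a) * (mavg P a x - mavg P a (x - a)) := by
    have hsplit : (∫ s in (x - a - a)..x, P s)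
        = (∫ s in (x - a - a)..(x - a), P s) + ∫ s in (x - a)..x, P s :=
      (intervalIntegral.integral_add_adjacent_intervals (hP.intervalIntegrable _ _)
        (hP.intervalIntegrable _ _)).symm
    simp only [mavg]
    rw [show x - 2 * a = x - a - a from by ring, hsplit]
    field_simp
    ring
  rw [key]
  exact hd.congr_of_eventuallyEq (Filter.Eventually.of_forall fun y => (hdavg y))
end

section
/- Let P be continuous and a > 0. Then P̄^a(x) − P̄^{2a}(x) = (a/2)·(d/dy P̃^{a,a})(y)|_{y = x − a}, where P̃^{a,a} = C_a(C_a P) is the double centered average; i.e., MACD equals (a/2) times the derivative of the double phase-corrected average, evaluated with delay a. -/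
open MeasureTheory

noncomputable def cavg (P : ℝ → ℝ) (a x : ℝ) : ℝ := (1 / a) * ∫ s in (x - a / 2)..(x + a / 2), P s

lemma primitive_hasDerivAt {Q : ℝ → ℝ} (hQ : Continuous Q) (y : ℝ) :
    HasDerivAt (fun t => ∫ s in (0:ℝ)..t, Q s) (Q y) y :=
  intervalIntegral.integral_hasDerivAt_right (hQ.intervalIntegrable _ _)
    (hQ.stronglyMeasurableAtFilter _ _) hQ.continuousAt

lemma cavg_eq {Q : ℝ → ℝ} (hQ : Continuous Q) (a y : ℝ) :
    cavg Q a y = (1 / a) * ((∫ s in (0:ℝ)..(y + a / 2), Q s) - ∫ s in (0:ℝ)..(y - a / 2), Q s) := by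
  have h := intervalIntegral.integral_add_adjacent_intervals (μ := volume)
    (hQ.intervalIntegrable 0 (y - a / 2)) (hQ.intervalIntegrable (y - a / 2) (y + a / 2))
  unfold cavg
  rw [← h]
  ring

lemma cavg_hasDerivAt {Q : ℝ → ℝ} (hQ : Continuous Q) (a : ℝ) (y : ℝ) :
    HasDerivAt (cavg Q a) ((1 / a) * (Q (y + a / 2) - Q (y - a / 2))) y := by
  have h1 : HasDerivAt (fun t => ∫ s in (0:ℝ)..(t + a / 2), Q s) (Q (y + a / 2)) y := by
    have := (primitive_hasDerivAt hQ (y + a / 2)).comp y ((hasDerivAt_id y).add_const (a / 2))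
    simpa [Function.comp_def] using this
  have h2 : HasDerivAt (fun t => ∫ s in (0:ℝ)..(t - a / 2), Q s) (Q (y - a / 2)) y := by
    have := (primitive_hasDerivAt hQ (y - a / 2)).comp y ((hasDerivAt_id y).sub_const (a / 2))
    simpa [Function.comp_def] using this
  have h := ((h1.sub h2).const_mul (1 / a))
  refine HasDerivAt.congr_of_eventuallyEq h ?_
  filter_upwards with t
  exact cavg_eq hQ a t

lemma cavg_continuous {Q : ℝ → ℝ} (hQ : Continuous Q) (a : ℝ) : Continuous (cavg Q a) :=
  continuous_iff_continuousAt.mpr fun y => (cavg_hasDerivAt hQ a y).continuousAt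

theorem stmt13 (P : ℝ → ℝ) (hP : Continuous P) (a : ℝ) (ha : 0 < a) (x : ℝ) :
    HasDerivAt (cavg (cavg P a) a)
      ((2 / a) * (mavg P a x - mavg P (2 * a) x)) (x - a) := by
  have key := cavg_hasDerivAt (cavg_continuous hP a) a (x - a)
  convert key using 1
  have hsplit : (∫ s in (x - 2 * a)..x, P s)
      = (∫ s in (x - 2 * a)..(x - a), P s) + ∫ s in (x - a)..x, P s :=
    (intervalIntegral.integral_add_adjacent_intervals (μ := volume)
      (hP.intervalIntegrable _ _) (hP.intervalIntegrable _ _)).symm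
  unfold mavg cavg
  have e1 : x - a + a / 2 - a / 2 = x - a := by ring
  have e2 : x - a + a / 2 + a / 2 = x := by ring
  have e3 : x - a - a / 2 - a / 2 = x - 2 * a := by ring
  have e4 : x - a - a / 2 + a / 2 = x - a := by ring
  rw [e1, e2, e3, e4, hsplit]
  field_simp
  ring
end

section
/- For continuous P, b > 0, and n ∈ ℕ with n ≥ 1 and a = n·b, the telescoping identity holds: P̄^a(x) − P̄^{a+b}(x) = Σ_{i=1}^n (i·b/(n(n+1)))·(d/dx P̄^{b,b})(x − (i−1)b), where P̄^{b,b}(x) := (1/b)∫_{x-b}^x P̄^b(s) ds is the double right-endpoint average over window b. -/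
open MeasureTheory

lemma integral_split (f : ℝ → ℝ) (hf : Continuous f) (a c : ℝ) :
    ∫ s in a..c, f s = (∫ s in (0:ℝ)..c, f s) - ∫ s in (0:ℝ)..a, f s := by
  exact (intervalIntegral.integral_interval_sub_left
    (hf.intervalIntegrable _ _) (hf.intervalIntegrable _ _)).symm

lemma mavg_continuous (P : ℝ → ℝ) (hP : Continuous P) (b : ℝ) :
    Continuous (mavg P b) := by
  have hG : Continuous (fun y : ℝ => ∫ s in (0:ℝ)..y, P s) := by
    rw [continuous_iff_continuousAt]
    exact fun y => ((hP.integral_hasStrictDerivAt 0 y).hasDerivAt).continuousAt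
  have : mavg P b = fun x => (1 / b) *
      ((∫ s in (0:ℝ)..x, P s) - ∫ s in (0:ℝ)..(x - b), P s) := by
    funext x
    rw [mavg, integral_split P hP]
  rw [this]
  exact continuous_const.mul (hG.sub (hG.comp (continuous_id.sub continuous_const)))

lemma deriv_davg (P : ℝ → ℝ) (hP : Continuous P) (b : ℝ) (y : ℝ) :
    deriv (davg P b) y = (mavg P b y - mavg P b (y - b)) / b := by
  have hF : Continuous (mavg P b) := mavg_continuous P hP b
  have hrw : davg P b = fun x => (1 / b) *
      ((∫ s in (0:ℝ)..x, mavg P b s) - ∫ s in (0:ℝ)..(x - b), mavg P b s) := by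
    funext x
    rw [davg, integral_split _ hF]
  rw [hrw]
  have h1 : HasDerivAt (fun x : ℝ => ∫ s in (0:ℝ)..x, mavg P b s) (mavg P b y) y :=
    (hF.integral_hasStrictDerivAt 0 y).hasDerivAt
  have h2 : HasDerivAt (fun x : ℝ => ∫ s in (0:ℝ)..(x - b), mavg P b s)
      (mavg P b (y - b)) y := by
    have := ((hF.integral_hasStrictDerivAt 0 (y - b)).hasDerivAt).comp y
      ((hasDerivAt_id y).sub_const b)
    simpa [Function.comp_def] using this
  have h3 : HasDerivAt (fun x : ℝ => (1 / b) *
      ((∫ s in (0:ℝ)..x, mavg P b s) - ∫ s in (0:ℝ)..(x - b), mavg P b s))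
      ((1 / b) * (mavg P b y - mavg P b (y - b))) y := (h1.sub h2).const_mul _
  rw [h3.deriv]
  ring

lemma abel_sum (f : ℕ → ℝ) (n : ℕ) :
    ∑ i ∈ Finset.Icc 1 n, (i : ℝ) * (f i - f (i + 1))
      = (∑ i ∈ Finset.Icc 1 n, f i) - n * f (n + 1) := by
  induction n with
  | zero => simp
  | succ m ih =>
      rw [Finset.sum_Icc_succ_top (Nat.le_add_left 1 m),
        Finset.sum_Icc_succ_top (Nat.le_add_left 1 m), ih]
      push_cast
      ring

lemma split_integral (P : ℝ → ℝ) (hP : Continuous P) (b x : ℝ) (n : ℕ) :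
    ∫ s in (x - n * b)..x, P s
      = ∑ i ∈ Finset.Icc 1 n, ∫ s in (x - i * b)..(x - ((i : ℝ) - 1) * b), P s := by
  induction n with
  | zero => simp
  | succ m ih =>
      rw [Finset.sum_Icc_succ_top (Nat.le_add_left 1 m), ← ih]
      have : x - ((m : ℝ) + 1 - 1) * b = x - m * b := by ring
      push_cast
      rw [this]
      rw [← intervalIntegral.integral_add_adjacent_intervals
        (hP.intervalIntegrable (x - ((m : ℝ) + 1) * b) (x - m * b))
        (hP.intervalIntegrable (x - (m : ℝ) * b) x)]
      ring_nf

theorem stmt14 (P : ℝ → ℝ) (hP : Continuous P) (b : ℝ) (hb : 0 < b)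
    (n : ℕ) (hn : 1 ≤ n) (a : ℝ) (ha : a = n * b) (x : ℝ) :
    mavg P a x - mavg P (a + b) x
      = ∑ i ∈ Finset.Icc 1 n,
          ((i : ℝ) * b / ((n : ℝ) * ((n : ℝ) + 1)))
            * deriv (davg P b) (x - ((i : ℝ) - 1) * b) := by
  set I : ℕ → ℝ := fun i => ∫ s in (x - i * b)..(x - ((i : ℝ) - 1) * b), P s with hI
  have hbne : b ≠ 0 := ne_of_gt hb
  have hnpos : (0 : ℝ) < n := by exact_mod_cast Nat.lt_of_lt_of_le Nat.zero_lt_one hn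
  have hnne : (n : ℝ) ≠ 0 := ne_of_gt hnpos
  have hn1ne : (n : ℝ) + 1 ≠ 0 := by positivity
  -- rewrite LHS
  have hL1 : mavg P a x = (1 / (n * b)) * ∑ i ∈ Finset.Icc 1 n, I i := by
    rw [mavg, ha, split_integral P hP]
  have hL2 : mavg P (a + b) x
      = (1 / ((n + 1) * b)) * ∑ i ∈ Finset.Icc 1 (n + 1), I i := by
    have h1 : a + b = ((n + 1 : ℕ) : ℝ) * b := by rw [ha]; push_cast; ring
    rw [mavg, h1, split_integral P hP]
    push_cast
    rfl
  -- rewrite RHS derivative terms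
  have hR : ∀ i ∈ Finset.Icc 1 n,
      ((i : ℝ) * b / ((n : ℝ) * ((n : ℝ) + 1)))
        * deriv (davg P b) (x - ((i : ℝ) - 1) * b)
      = (1 / ((n : ℝ) * ((n : ℝ) + 1) * b)) * ((i : ℝ) * (I i - I (i + 1))) := by
    intro i _
    rw [deriv_davg P hP b]
    have e1 : mavg P b (x - ((i : ℝ) - 1) * b) = (1 / b) * I i := by
      rw [mavg, hI]
      have : x - ((i : ℝ) - 1) * b - b = x - i * b := by ring
      rw [this]
    have e2 : mavg P b (x - ((i : ℝ) - 1) * b - b) = (1 / b) * I (i + 1) := by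
      rw [mavg, hI]
      have h1 : x - ((i : ℝ) - 1) * b - b - b = x - ((i : ℕ) + 1 : ℕ) * b := by
        push_cast; ring
      have h2 : x - ((i : ℝ) - 1) * b - b = x - ((((i : ℕ) + 1 : ℕ) : ℝ) - 1) * b := by
        push_cast; ring
      rw [h1, h2]
    rw [e1, e2]
    field_simp
  rw [Finset.sum_congr rfl hR, ← Finset.mul_sum, abel_sum I n, hL1, hL2,
    Finset.sum_Icc_succ_top (Nat.le_add_left 1 n)]
  field_simp
  ring
end
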